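/- Let n and k be natural numbers with k ≤ n, and let P be the n×n complex diagonal matrix with P i i = 1 for i < k and all other entries 0 (so P² = P and Pᵀ = P). Define the 2n×2n matrices A_k = fromBlocks 1 0 P 1, U_k = fromBlocks 1 P 0 1, W_k = fromBlocks (1−P) P (−P) (1−P), and B_k = fromBlocks (1−2·P) (−P) 0 (1−2·P). Then: (a) A_k = U_k * W_k * B_k; (b) A_k and W_k belong to Sp(2n,ℂ); (c) U_k and B_k are upper triangular and invertible; (d) (A_k − 1)² = 0 and rank(A_k − 1) = k. -/

import Mathlib

open Matrix

/-- The standard symplectic form matrix `J₂ₙ = fromBlocks 0 Iₙ (−Iₙ) 0`. -/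
def Jsymp (n : ℕ) : Matrix (Fin n ⊕ Fin n) (Fin n ⊕ Fin n) ℂ :=
  fromBlocks 0 1 (-1) 0

/-- Membership in the symplectic group `Sp(2n,ℂ)`: `M * J₂ₙ * Mᵀ = J₂ₙ`. -/
def IsSymplectic (n : ℕ) (M : Matrix (Fin n ⊕ Fin n) (Fin n ⊕ Fin n) ℂ) : Prop :=
  M * Jsymp n * Mᵀ = Jsymp n

/-- The diagonal projection `P` with `P i i = 1` for `i < k` and `0` otherwise. -/
def Pproj (n k : ℕ) : Matrix (Fin n) (Fin n) ℂ :=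
  Matrix.of fun i j => if i = j ∧ (i : ℕ) < k then 1 else 0

lemma Pproj_eq_diagonal (n k : ℕ) :
    Pproj n k = diagonal (fun i : Fin n => if (i : ℕ) < k then (1 : ℂ) else 0) := by
  ext i j
  simp only [Pproj, of_apply, diagonal_apply]
  split_ifs with h1 h2 h3 <;> first | rfl | tauto

lemma Pproj_mul_self (n k : ℕ) : Pproj n k * Pproj n k = Pproj n k := by
  rw [Pproj_eq_diagonal, diagonal_mul_diagonal]
  refine congrArg diagonal ?_
  funext i
  split_ifs <;> ring

lemma Pproj_transpose (n k : ℕ) : (Pproj n k)ᵀ = Pproj n k := by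
  rw [Pproj_eq_diagonal, diagonal_transpose]

lemma Pproj_apply_ne (n k : ℕ) {i j : Fin n} (h : i ≠ j) : Pproj n k i j = 0 := by
  simp [Pproj, h]

lemma fromBlocks_sub' {l m : Type*} (A A' : Matrix l l ℂ) (B B' : Matrix l m ℂ)
    (C C' : Matrix m l ℂ) (D D' : Matrix m m ℂ) :
    fromBlocks A B C D - fromBlocks A' B' C' D' =
      fromBlocks (A - A') (B - B') (C - C') (D - D') := by
  ext (i | i) (j | j) <;> simp [fromBlocks, Matrix.sub_apply]

/-- Proof of Theorem "classical-unipotent", type `Cₙ`: the representative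
`A_k = fromBlocks 1 0 P 1` of the spherical unipotent class `X_{k,2n}` of
`Sp(2n,ℂ)` lies in the opposite Borel and in the Bruhat cell `B·ẇ_k·B`. -/
theorem typeC_unipotent_representative (n k : ℕ) (hk : k ≤ n) :
    (fromBlocks 1 0 (Pproj n k) 1 : Matrix (Fin n ⊕ Fin n) (Fin n ⊕ Fin n) ℂ) =
        fromBlocks 1 (Pproj n k) 0 1 *
          fromBlocks (1 - Pproj n k) (Pproj n k) (-(Pproj n k)) (1 - Pproj n k) *
          fromBlocks (1 - 2 • Pproj n k) (-(Pproj n k)) 0 (1 - 2 • Pproj n k) ∧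
    IsSymplectic n (fromBlocks 1 0 (Pproj n k) 1) ∧
    IsSymplectic n
      (fromBlocks (1 - Pproj n k) (Pproj n k) (-(Pproj n k)) (1 - Pproj n k)) ∧
    (∀ i j : Fin n ⊕ Fin n, ∀ hij : (Sum.elim Fin.val (fun i => n + i.val) j <
        Sum.elim Fin.val (fun i => n + i.val) i),
      (fromBlocks 1 (Pproj n k) 0 1 : Matrix (Fin n ⊕ Fin n) (Fin n ⊕ Fin n) ℂ) i j = 0) ∧
    IsUnit (fromBlocks 1 (Pproj n k) 0 1 : Matrix (Fin n ⊕ Fin n) (Fin n ⊕ Fin n) ℂ) ∧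
    (∀ i j : Fin n ⊕ Fin n, ∀ hij : (Sum.elim Fin.val (fun i => n + i.val) j <
        Sum.elim Fin.val (fun i => n + i.val) i),
      (fromBlocks (1 - 2 • Pproj n k) (-(Pproj n k)) 0 (1 - 2 • Pproj n k) :
        Matrix (Fin n ⊕ Fin n) (Fin n ⊕ Fin n) ℂ) i j = 0) ∧
    IsUnit (fromBlocks (1 - 2 • Pproj n k) (-(Pproj n k)) 0 (1 - 2 • Pproj n k) :
        Matrix (Fin n ⊕ Fin n) (Fin n ⊕ Fin n) ℂ) ∧
    ((fromBlocks 1 0 (Pproj n k) 1 : Matrix (Fin n ⊕ Fin n) (Fin n ⊕ Fin n) ℂ) - 1) *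
      ((fromBlocks 1 0 (Pproj n k) 1 : Matrix (Fin n ⊕ Fin n) (Fin n ⊕ Fin n) ℂ) - 1) = 0 ∧
    ((fromBlocks 1 0 (Pproj n k) 1 : Matrix (Fin n ⊕ Fin n) (Fin n ⊕ Fin n) ℂ) - 1).rank
      = k := by
  have hP : Pproj n k * Pproj n k = Pproj n k := Pproj_mul_self n k
  have hPt : (Pproj n k)ᵀ = Pproj n k := Pproj_transpose n k
  refine ⟨?_, ?_, ?_, ?_, ?_, ?_, ?_, ?_, ?_⟩
  · -- Bruhat decomposition A = U * W * B
    simp only [fromBlocks_multiply, two_smul, mul_sub, sub_mul, mul_add, add_mul, hP,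
      Matrix.mul_one, Matrix.one_mul, Matrix.mul_zero, Matrix.zero_mul, Matrix.neg_mul,
      Matrix.mul_neg, neg_neg, fromBlocks_inj]
    refine ⟨?_, ?_, ?_, ?_⟩ <;> abel
  · -- A symplectic
    simp only [IsSymplectic, Jsymp, fromBlocks_transpose, fromBlocks_multiply, hPt,
      transpose_one, transpose_zero, Matrix.mul_one, Matrix.one_mul, Matrix.mul_zero,
      Matrix.zero_mul, Matrix.neg_mul, Matrix.mul_neg, fromBlocks_inj, neg_add_cancel,
      neg_zero, and_self, and_true, true_and, add_zero, zero_add]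
  · -- W symplectic
    simp only [IsSymplectic, Jsymp, fromBlocks_transpose, fromBlocks_multiply, hPt,
      transpose_one, transpose_zero, transpose_neg, transpose_sub, mul_sub, sub_mul,
      mul_add, add_mul, hP,
      Matrix.mul_one, Matrix.one_mul, Matrix.mul_zero, Matrix.zero_mul, Matrix.neg_mul,
      Matrix.mul_neg, neg_neg, neg_sub, neg_zero, sub_zero, zero_sub, add_zero, zero_add,
      sub_self, fromBlocks_inj]
    refine ⟨trivial, ?_, ?_, trivial⟩ <;> abel
  · -- U upper triangular
    rintro (i | i) (j | j) hij <;> simp only [Sum.elim_inl, Sum.elim_inr] at hij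
    · have : i ≠ j := fun h => by omega
      simp [fromBlocks, Matrix.one_apply_ne this]
    · exact absurd hij (by omega)
    · simp [fromBlocks]
    · have : i ≠ j := fun h => by simp [h] at hij
      simp [fromBlocks, Matrix.one_apply_ne this]
  · -- U invertible
    refine (isUnit_iff_isUnit_det _).mpr (isUnit_det_of_right_inverse (B := fromBlocks 1 (-(Pproj n k)) 0 1) ?_)
    rw [← fromBlocks_one (l := Fin n) (m := Fin n) (α := ℂ)]
    simp only [fromBlocks_multiply, Matrix.mul_one, Matrix.one_mul, Matrix.mul_zero,
      Matrix.zero_mul, fromBlocks_inj, add_neg_cancel, neg_add_cancel, and_self,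
      and_true, true_and, add_zero, zero_add]
  · -- B lower entries vanish
    rintro (i | i) (j | j) hij <;> simp only [Sum.elim_inl, Sum.elim_inr] at hij
    · have h : i ≠ j := fun h => by omega
      simp only [fromBlocks_apply₁₁, Matrix.sub_apply, Matrix.smul_apply, Matrix.one_apply_ne h,
        Pproj_apply_ne n k h, smul_zero, sub_zero]
    · exact absurd hij (by omega)
    · simp [fromBlocks]
    · have h : i ≠ j := fun h => by simp [h] at hij
      simp only [fromBlocks_apply₂₂, Matrix.sub_apply, Matrix.smul_apply, Matrix.one_apply_ne h,
        Pproj_apply_ne n k h, smul_zero, sub_zero]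
  · -- B invertible
    refine (isUnit_iff_isUnit_det _).mpr (isUnit_det_of_right_inverse
      (B := fromBlocks (1 - 2 • Pproj n k) (Pproj n k) 0 (1 - 2 • Pproj n k)) ?_)
    rw [← fromBlocks_one (l := Fin n) (m := Fin n) (α := ℂ)]
    simp only [fromBlocks_multiply, two_smul, mul_sub, sub_mul, mul_add, add_mul, hP,
      Matrix.mul_one, Matrix.one_mul, Matrix.mul_zero, Matrix.zero_mul, Matrix.neg_mul,
      Matrix.mul_neg, neg_neg, fromBlocks_inj]
    refine ⟨?_, ?_, ?_, ?_⟩ <;> abel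
  · -- (A - 1)² = 0
    rw [← fromBlocks_one (l := Fin n) (m := Fin n) (α := ℂ), fromBlocks_sub']
    simp [fromBlocks_multiply]
  · -- rank (A - 1) = k
    let w : Fin n → ℂ := fun i => if (i : ℕ) < k then (1 : ℂ) else 0
    have h1 : (fromBlocks 1 0 (Pproj n k) 1 : Matrix (Fin n ⊕ Fin n) (Fin n ⊕ Fin n) ℂ) - 1
        = fromBlocks 0 0 (Pproj n k) 0 := by
      rw [← fromBlocks_one (l := Fin n) (m := Fin n) (α := ℂ), fromBlocks_sub']
      simp
    have h2 : (fromBlocks 0 0 (Pproj n k) 0 : Matrix (Fin n ⊕ Fin n) (Fin n ⊕ Fin n) ℂ)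
        = (diagonal (Sum.elim w 0)).submatrix (Equiv.sumComm (Fin n) (Fin n))
            (Equiv.refl (Fin n ⊕ Fin n)) := by
      ext (i | i) (j | j) <;>
        simp [w, Pproj, diagonal_apply, Sum.elim, submatrix_apply] <;>
        split_ifs <;> tauto
    rw [h1, h2, rank_submatrix, rank_diagonal]
    have e : {x : Fin n ⊕ Fin n // Sum.elim w 0 x ≠ 0} ≃
        ({a : Fin n // w a ≠ 0} ⊕ {b : Fin n // (0 : Fin n → ℂ) b ≠ 0}) :=
      Equiv.subtypeSum
    rw [Fintype.card_congr e, Fintype.card_sum]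
    have h3 : Fintype.card {b : Fin n // (0 : Fin n → ℂ) b ≠ 0} = 0 := by
      simp
    have e2 : {a : Fin n // w a ≠ 0} ≃ Fin k :=
      { toFun := fun a => ⟨(a.1 : ℕ), by
          by_contra h
          exact a.2 (by simp [w, if_neg (fun hh => h hh)])⟩
        invFun := fun j => ⟨⟨(j : ℕ), lt_of_lt_of_le j.2 hk⟩, by
          simp [w, j.2]⟩
        left_inv := fun a => by ext; rfl
        right_inv := fun j => by ext; rfl }
    rw [h3, Fintype.card_congr e2, Fintype.card_fin, Nat.add_zero]
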